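/- Let p be a prime and let k ⊆ L be a finite extension of fields of characteristic p that is not separable. Let R = k + xL[[x]] be the subring of L[[x]] of power series with constant term in k, and let K be the perfect closure of k. Then the ring K ⊗_k R is not reduced: there exists a nonzero element v ∈ K ⊗_k R with v^p = 0. -/

import Mathlib

open scoped TensorProduct

/-- The subring `R = k + xL⟦x⟧` of the power series ring `L⟦x⟧`: power series whose constant
term lies in (the image of) `k`. -/
noncomputable def kPlusXL (k L : Type*) [Field k] [Field L] [Algebra k L] : Subring (PowerSeries L) :=
  Subring.comap (PowerSeries.constantCoeff (R := L)) (algebraMap k L).range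

/-- `R = k + xL⟦x⟧` is a `k`-algebra via the constant power series. -/
noncomputable instance (k L : Type*) [Field k] [Field L] [Algebra k L] :
    Algebra k (kPlusXL k L) :=
  RingHom.toAlgebra <|
    RingHom.codRestrict ((PowerSeries.C (R := L)).comp (algebraMap k L)) (kPlusXL k L) fun c => by
      simp [kPlusXL, Subring.mem_comap]

/-- The perfect closure `K` of `k` is a `k`-algebra. -/
noncomputable instance (k : Type*) [Field k] (p : ℕ) [Fact p.Prime] [CharP k p] :
    Algebra k (PerfectClosure k p) :=
  (PerfectClosure.of k p).toAlgebra

section Aux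

variable {k L : Type*} [Field k] [Field L] [Algebra k L]

lemma kPlusXL.coe_smul (b : k) (r : kPlusXL k L) :
    ((b • r : kPlusXL k L) : PowerSeries L) = PowerSeries.C (R := L) (algebraMap k L b) * (r : PowerSeries L) := by
  rw [Algebra.smul_def]
  rfl

/-- `X * C b` as an element of `kPlusXL k L`. -/
noncomputable def kPlusXL.xe (b : L) : kPlusXL k L :=
  ⟨PowerSeries.X * PowerSeries.C (R := L) b, by
    simp only [kPlusXL, Subring.mem_comap, map_mul, PowerSeries.constantCoeff_X, zero_mul]
    exact ⟨0, map_zero _⟩⟩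

noncomputable def kPlusXL.tau0 (r : kPlusXL k L) : k :=
  Function.invFun (algebraMap k L) (PowerSeries.constantCoeff (R := L) (r : PowerSeries L))

lemma kPlusXL.tau0_spec (r : kPlusXL k L) :
    algebraMap k L (kPlusXL.tau0 r) = PowerSeries.constantCoeff (R := L) (r : PowerSeries L) :=
  Function.invFun_eq r.2

/-- The `k`-linear "constant coefficient" functional on `kPlusXL k L`. -/
noncomputable def kPlusXL.tau : kPlusXL k L →ₗ[k] k where
  toFun := kPlusXL.tau0
  map_add' r s := by
    apply (algebraMap k L).injective
    rw [map_add, tau0_spec, tau0_spec, tau0_spec]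
    push_cast
    rw [map_add]
  map_smul' b r := by
    apply (algebraMap k L).injective
    show algebraMap k L (tau0 (b • r)) = algebraMap k L ((RingHom.id k) b • tau0 r)
    rw [RingHom.id_apply, smul_eq_mul, map_mul, tau0_spec, tau0_spec, kPlusXL.coe_smul,
      map_mul, PowerSeries.constantCoeff_C]

lemma kPlusXL.tau_one : (kPlusXL.tau : kPlusXL k L →ₗ[k] k) 1 = 1 := by
  apply (algebraMap k L).injective
  show algebraMap k L (tau0 1) = _
  rw [tau0_spec]
  simp

/-- The `k`-linear "coefficient of `X`" functional `kPlusXL k L → L`. -/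
noncomputable def kPlusXL.coeff1 : kPlusXL k L →ₗ[k] L where
  toFun r := PowerSeries.coeff (R := L) 1 (r : PowerSeries L)
  map_add' r s := by push_cast; rw [map_add]
  map_smul' b r := by
    simp only [RingHom.id_apply]
    rw [kPlusXL.coe_smul, PowerSeries.coeff_C_mul, Algebra.smul_def]

lemma kPlusXL.coeff1_xe (b : L) : (kPlusXL.coeff1 : kPlusXL k L →ₗ[k] L) (kPlusXL.xe b) = b := by
  show PowerSeries.coeff (R := L) 1 (PowerSeries.X * PowerSeries.C (R := L) b) = b
  rw [show (1:ℕ) = 0 + 1 from rfl, PowerSeries.coeff_succ_X_mul,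
    PowerSeries.coeff_zero_eq_constantCoeff, PowerSeries.constantCoeff_C]

end Aux

section Aux2

variable {k : Type*} [Field k]

/-- Evaluation of a dual functional on the right factor of a tensor product. -/
noncomputable def dualEval {K R : Type*} [AddCommGroup K] [Module k K]
    [AddCommGroup R] [Module k R] (t : R →ₗ[k] k) : K ⊗[k] R →ₗ[k] K :=
  (TensorProduct.rid k K).toLinearMap ∘ₗ TensorProduct.map LinearMap.id t

@[simp] lemma dualEval_tmul {K R : Type*} [AddCommGroup K] [Module k K]
    [AddCommGroup R] [Module k R] (t : R →ₗ[k] k) (x : K) (r : R) :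
    dualEval t (x ⊗ₜ r) = t r • x := by
  simp [dualEval]

/-- A dual functional for powers of an element below the degree bound. -/
lemma exists_pow_dual {L : Type*} [Field L] [Algebra k L] {d m : ℕ} (a : L)
    (hli : LinearIndependent k fun i : Fin d => a ^ (i : ℕ)) (hmd : m < d) :
    ∃ π : L →ₗ[k] k, ∀ i ≤ m, π (a ^ i) = if i = m then 1 else 0 := by
  classical
  have hs : LinearIndepOn k id (Set.range (fun i : Fin d => a ^ (i : ℕ))) :=
    (linearIndepOn_id_range_iff hli.injective).mpr hli
  have hmem : ∀ i, i ≤ m → a ^ i ∈ hs.extend (Set.subset_univ _) := fun i hi =>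
    hs.subset_extend _ ⟨⟨i, lt_of_le_of_lt hi hmd⟩, rfl⟩
  refine ⟨(Module.Basis.extend hs).coord ⟨a ^ m, hmem m le_rfl⟩, fun i hi => ?_⟩
  have h1 : a ^ i = (Module.Basis.extend hs) ⟨a ^ i, hmem i hi⟩ := (Module.Basis.extend_apply_self hs ⟨a ^ i, hmem i hi⟩).symm
  rw [h1, Module.Basis.coord_apply, Module.Basis.repr_self_apply]
  by_cases h : i = m
  · subst h; simp
  · rw [if_neg, if_neg h]
    intro he
    apply h
    have h2 : a ^ i = a ^ m := by simpa using Subtype.ext_iff.mp he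
    have h3 : (fun j : Fin d => a ^ (j : ℕ)) ⟨i, lt_of_le_of_lt hi hmd⟩ =
        (fun j : Fin d => a ^ (j : ℕ)) ⟨m, hmd⟩ := h2
    simpa using congrArg Fin.val (hli.injective h3)

/-- Characteristic `p` of a tensor product when the right factor retracts onto `k`. -/
lemma charP_tensor {K R : Type*} [CommRing K] [Algebra k K] [CommRing R] [Algebra k R]
    (p : ℕ) [CharP K p] (t : R →ₗ[k] k) (ht : t 1 = 1) : CharP (K ⊗[k] R) p := by
  constructor
  intro n
  have hcast : (n : K ⊗[k] R) = (n : K) ⊗ₜ (1 : R) := by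
    rw [show ((n : K ⊗[k] R)) = algebraMap K (K ⊗[k] R) (n : K) by rw [map_natCast],
      Algebra.TensorProduct.algebraMap_apply, Algebra.algebraMap_self_apply]
  constructor
  · intro hn
    have h2 : ((n : K)) = 0 := by
      have h3 := congrArg (dualEval t) (hcast.symm.trans hn)
      rwa [dualEval_tmul, ht, one_smul, map_zero] at h3
    exact (CharP.cast_eq_zero_iff K p n).mp h2
  · intro hdvd
    rw [hcast, (CharP.cast_eq_zero_iff K p n).mpr hdvd, TensorProduct.zero_tmul]

end Aux2

set_option maxHeartbeats 1000000 in
set_option synthInstance.maxHeartbeats 200000 in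
/-- Let `k ⊆ L` be a finite *inseparable* extension of fields of prime characteristic `p`,
`R = k + xL⟦x⟧`, and `K` the perfect closure of `k`.  Then `K ⊗_k R` is not reduced: it
contains a nonzero element `v` with `v^p = 0`. -/
theorem perfectClosure_tensor_not_reduced
    (p : ℕ) [Fact p.Prime]
    (k L : Type*) [Field k] [Field L] [Algebra k L] [CharP k p] [CharP L p]
    [Module.Finite k L] (hsep : ¬ Algebra.IsSeparable k L) :
    ∃ v : (PerfectClosure k p) ⊗[k] (kPlusXL k L), v ≠ 0 ∧ v ^ p = 0 := by
  classical
  obtain ⟨a, ha⟩ : ∃ a : L, ¬ (minpoly k a).Separable := by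
    by_contra h
    push_neg at h
    exact hsep ⟨h⟩
  have hint : IsIntegral k a := Algebra.IsIntegral.isIntegral a
  have hfirr : Irreducible (minpoly k a) := minpoly.irreducible hint
  have hder : Polynomial.derivative (minpoly k a) = 0 := by
    by_contra h
    exact ha ((Polynomial.separable_iff_derivative_ne_zero hfirr).mpr h)
  set g := Polynomial.contract p (minpoly k a) with hgdef
  have hexp : Polynomial.expand k p g = minpoly k a :=
    Polynomial.expand_contract p hder (Fact.out : p.Prime).ne_zero
  set m := g.natDegree with hm
  set d := (minpoly k a).natDegree with hd
  have hdeg : d = m * p := by rw [hd, ← hexp, Polynomial.natDegree_expand]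
  have hd1 : 0 < d := minpoly.natDegree_pos hint
  have hplt : 1 < p := (Fact.out : p.Prime).one_lt
  have hm1 : 0 < m := by
    rcases Nat.eq_zero_or_pos m with h | h
    · rw [h, zero_mul] at hdeg; omega
    · exact h
  have hmd : m < d := by rw [hdeg]; nlinarith
  -- the p-th roots of the coefficients of g in the perfect closure
  set c : ℕ → PerfectClosure k p := fun i =>
    (frobeniusEquiv (PerfectClosure k p) p).symm
      (algebraMap k (PerfectClosure k p) (g.coeff i)) with hc
  have hcp : ∀ i, c i ^ p = algebraMap k (PerfectClosure k p) (g.coeff i) := fun i =>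
    frobeniusEquiv_symm_pow_p (PerfectClosure k p) p _
  have hgm : g.coeff m ≠ 0 := by
    have hg0 : g ≠ 0 := by
      intro h
      apply minpoly.ne_zero hint
      rw [← hexp, h, map_zero]
    simpa [hm] using Polynomial.leadingCoeff_ne_zero.mpr hg0
  have hcm : c m ≠ 0 := by
    simp only [hc]
    intro h
    rw [EmbeddingLike.map_eq_zero_iff] at h
    exact hgm ((map_eq_zero_iff _ (algebraMap k (PerfectClosure k p)).injective).mp h)
  -- the dual functional
  have hli : LinearIndependent k fun i : Fin d => a ^ (i : ℕ) := linearIndependent_pow a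
  obtain ⟨π, hπ⟩ := exists_pow_dual a hli hmd
  -- characteristic p of the tensor product
  haveI hchar : CharP ((PerfectClosure k p) ⊗[k] (kPlusXL k L)) p :=
    charP_tensor p kPlusXL.tau kPlusXL.tau_one
  -- the nilpotent element
  refine ⟨∑ i ∈ Finset.range (m + 1), c i ⊗ₜ kPlusXL.xe (a ^ i), ?_, ?_⟩
  · -- nonzero
    intro hv0
    apply hcm
    have h1 : dualEval (π ∘ₗ kPlusXL.coeff1)
        (∑ i ∈ Finset.range (m + 1), c i ⊗ₜ kPlusXL.xe (a ^ i)) = c m := by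
      rw [map_sum,
        Finset.sum_congr rfl (fun i hi =>
          show dualEval (π ∘ₗ kPlusXL.coeff1) (c i ⊗ₜ kPlusXL.xe (a ^ i)) =
            if i = m then c i else 0 by
          rw [dualEval_tmul, LinearMap.comp_apply, kPlusXL.coeff1_xe,
            hπ i (Finset.mem_range_succ_iff.mp hi)]
          split_ifs <;> simp),
        Finset.sum_ite_eq' (Finset.range (m + 1)) m c,
        if_pos (Finset.self_mem_range_succ m)]
    rw [hv0, (dualEval (π ∘ₗ kPlusXL.coeff1)).map_zero] at h1
    exact h1.symm
  · -- p-th power vanishes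
    haveI : ExpChar ((PerfectClosure k p) ⊗[k] (kPlusXL k L)) p := ExpChar.prime Fact.out
    rw [sum_pow_char]
    have hterm : ∀ i ∈ Finset.range (m + 1),
        (c i ⊗ₜ[k] (kPlusXL.xe (a ^ i) : kPlusXL k L)) ^ p =
          (1 : PerfectClosure k p) ⊗ₜ[k]
            (g.coeff i • (kPlusXL.xe (a ^ i) : kPlusXL k L) ^ p) := by
      intro i _
      rw [Algebra.TensorProduct.tmul_pow, hcp i, Algebra.algebraMap_eq_smul_one,
        TensorProduct.smul_tmul]
    rw [Finset.sum_congr rfl hterm, ← TensorProduct.tmul_sum]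
    have hzero : (∑ i ∈ Finset.range (m + 1), g.coeff i • kPlusXL.xe (a ^ i) ^ p)
        = (0 : kPlusXL k L) := by
      apply Subtype.ext
      push_cast
      have hval : ∀ i, ((g.coeff i • kPlusXL.xe (a ^ i) ^ p : kPlusXL k L) : PowerSeries L) =
          PowerSeries.C (R := L) (algebraMap k L (g.coeff i) * (a ^ p) ^ i) * PowerSeries.X ^ p := by
        intro i
        rw [kPlusXL.coe_smul]
        have hpow : ((kPlusXL.xe (a ^ i) ^ p : kPlusXL k L) : PowerSeries L) =
            (PowerSeries.X * PowerSeries.C (R := L) (a ^ i)) ^ p := by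
          push_cast; rfl
        rw [hpow, mul_pow, ← map_pow, ← pow_mul, ← pow_mul', pow_mul, map_mul]
        ring
      calc (∑ i ∈ Finset.range (m + 1),
            ((g.coeff i • kPlusXL.xe (a ^ i) ^ p : kPlusXL k L) : PowerSeries L))
          = ∑ i ∈ Finset.range (m + 1),
            PowerSeries.C (R := L) (algebraMap k L (g.coeff i) * (a ^ p) ^ i) * PowerSeries.X ^ p :=
            Finset.sum_congr rfl fun i _ => hval i
        _ = PowerSeries.C (R := L) (∑ i ∈ Finset.range (m + 1),
              algebraMap k L (g.coeff i) * (a ^ p) ^ i) * PowerSeries.X ^ p := by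
            rw [map_sum, Finset.sum_mul]
        _ = 0 := by
            have haev : (∑ i ∈ Finset.range (m + 1),
                algebraMap k L (g.coeff i) * (a ^ p) ^ i) = Polynomial.aeval (a ^ p) g := by
              rw [Polynomial.aeval_eq_sum_range' (Nat.lt_succ_self m)]
              exact Finset.sum_congr rfl fun i _ => by rw [Algebra.smul_def]
            rw [haev, ← Polynomial.expand_aeval p g a, hexp, minpoly.aeval, map_zero, zero_mul]
    rw [hzero, TensorProduct.tmul_zero]
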